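/- Let G₂ : ℝ² → ℝ be continuously differentiable (coordinates (ξ₀, ξ₁)) and suppose ξ₀³ ∂G₂/∂ξ₀ + ξ₁³ ∂G₂/∂ξ₁ = 0 at every point of the quadrant Q = {(ξ₀, ξ₁) : ξ₀ > 0, ξ₁ > 0}. Then there exists a function G₃ : ℝ → ℝ such that G₂(ξ₀, ξ₁) = G₃(ξ₀^{−2} − ξ₁^{−2}) for all (ξ₀, ξ₁) ∈ Q. -/

import Mathlib

open Real Set

/-- Derivative of `s ↦ (√(u + s*d))⁻¹`. -/
private lemma aux_hasDerivAt (u d t : ℝ) (hw : 0 < u + t * d) :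
    HasDerivAt (fun s : ℝ => (Real.sqrt (u + s * d))⁻¹)
      (-(d / 2) * ((Real.sqrt (u + t * d))⁻¹) ^ 3) t := by
  have hlin : HasDerivAt (fun s : ℝ => u + s * d) d t :=
    (hasDerivAt_mul_const d).const_add u
  have hsqrt : HasDerivAt (fun s : ℝ => Real.sqrt (u + s * d))
      (1 / (2 * Real.sqrt (u + t * d)) * d) t :=
    (Real.hasDerivAt_sqrt hw.ne').comp t hlin
  have hs : Real.sqrt (u + t * d) ≠ 0 := (Real.sqrt_pos.2 hw).ne'
  have := hsqrt.inv hs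
  refine this.congr_deriv ?_
  ring

private lemma key (G₂ : ℝ × ℝ → ℝ) (hG₂ : ContDiff ℝ 1 G₂)
    (h : ∀ p : ℝ × ℝ, 0 < p.1 → 0 < p.2 →
      p.1 ^ 3 * fderiv ℝ G₂ p (1, 0) + p.2 ^ 3 * fderiv ℝ G₂ p (0, 1) = 0)
    (a b d : ℝ) (ha : 0 < a) (hb : 0 < b) (had : 0 < a + d) (hbd : 0 < b + d) :
    G₂ ((Real.sqrt (a + d))⁻¹, (Real.sqrt (b + d))⁻¹)
      = G₂ ((Real.sqrt a)⁻¹, (Real.sqrt b)⁻¹) := by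
  set φ : ℝ → ℝ := fun t => G₂ ((Real.sqrt (a + t * d))⁻¹, (Real.sqrt (b + t * d))⁻¹) with hφdef
  have hpos : ∀ u : ℝ, 0 < u → 0 < u + d → ∀ t ∈ Icc (0:ℝ) 1, 0 < u + t * d := by
    intro u hu hud t ht
    have : u + t * d = (1 - t) * u + t * (u + d) := by ring
    rw [this]
    rcases eq_or_lt_of_le ht.1 with h0 | h0
    · simp [← h0, hu]
    · have h1 : 0 ≤ 1 - t := by linarith [ht.2]
      nlinarith
  have hderiv : ∀ t ∈ Icc (0:ℝ) 1, HasDerivAt φ 0 t := by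
    intro t ht
    have hwa := hpos a ha had t ht
    have hwb := hpos b hb hbd t ht
    set x := (Real.sqrt (a + t * d))⁻¹ with hx
    set y := (Real.sqrt (b + t * d))⁻¹ with hy
    have hxpos : 0 < x := by positivity
    have hypos : 0 < y := by
      have := Real.sqrt_pos.2 hwb
      positivity
    have hfa := aux_hasDerivAt a d t hwa
    have hfb := aux_hasDerivAt b d t hwb
    have hpair : HasDerivAt
        (fun s : ℝ => ((Real.sqrt (a + s * d))⁻¹, (Real.sqrt (b + s * d))⁻¹))
        (-(d / 2) * x ^ 3, -(d / 2) * y ^ 3) t := hfa.prodMk hfb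
    have hG : HasFDerivAt G₂ (fderiv ℝ G₂ (x, y)) (x, y) :=
      (hG₂.differentiable one_ne_zero (x, y)).hasFDerivAt
    have hcomp := hG.comp_hasDerivAt t hpair
    have hL : (fderiv ℝ G₂ (x, y)) (-(d / 2) * x ^ 3, -(d / 2) * y ^ 3) = 0 := by
      have hdec : ((-(d / 2) * x ^ 3, -(d / 2) * y ^ 3) : ℝ × ℝ)
          = (-(d / 2) * x ^ 3) • ((1:ℝ), (0:ℝ)) + (-(d / 2) * y ^ 3) • ((0:ℝ), (1:ℝ)) := by
        simp [Prod.ext_iff]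
      rw [hdec, map_add, map_smul, map_smul]
      have hh := h (x, y) hxpos hypos
      simp only [smul_eq_mul]
      linear_combination -(d / 2) * hh
    rw [hL] at hcomp
    exact hcomp
  have hcont : ContinuousOn φ (Icc 0 1) :=
    fun t ht => ((hderiv t ht).continuousAt).continuousWithinAt
  have hconst : φ 1 = φ 0 := by
    have := constant_of_has_deriv_right_zero hcont
      (fun t ht => ((hderiv t (Ico_subset_Icc_self ht)).hasDerivWithinAt)) 1
      (right_mem_Icc.2 zero_le_one)
    exact this
  simpa [hφdef] using hconst

theorem abel_characteristics_two (G₂ : ℝ × ℝ → ℝ) (hG₂ : ContDiff ℝ 1 G₂)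
    (h : ∀ p : ℝ × ℝ, 0 < p.1 → 0 < p.2 →
      p.1 ^ 3 * fderiv ℝ G₂ p (1, 0) + p.2 ^ 3 * fderiv ℝ G₂ p (0, 1) = 0) :
    ∃ G₃ : ℝ → ℝ, ∀ p : ℝ × ℝ, 0 < p.1 → 0 < p.2 →
      G₂ p = G₃ ((p.1 ^ 2)⁻¹ - (p.2 ^ 2)⁻¹) := by
  refine ⟨fun c => G₂ ((Real.sqrt (max c 0 + 1))⁻¹, (Real.sqrt (max c 0 + 1 - c))⁻¹),
    fun p hx hy => ?_⟩
  set c := (p.1 ^ 2)⁻¹ - (p.2 ^ 2)⁻¹ with hc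
  set a := max c 0 + 1 with hadef
  set b := max c 0 + 1 - c with hbdef
  have ha : 0 < a := by positivity
  have hb : 0 < b := by
    have : c ≤ max c 0 := le_max_left _ _
    simp only [hbdef]; linarith
  set d := (p.1 ^ 2)⁻¹ - a with hddef
  have had : a + d = (p.1 ^ 2)⁻¹ := by ring
  have hbd : b + d = (p.2 ^ 2)⁻¹ := by simp only [hbdef, hddef, hc]; ring
  have hadp : 0 < a + d := by rw [had]; positivity
  have hbdp : 0 < b + d := by rw [hbd]; positivity
  have hkey := key G₂ hG₂ h a b d ha hb hadp hbdp
  rw [had, hbd] at hkey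
  have e1 : (Real.sqrt ((p.1 ^ 2)⁻¹))⁻¹ = p.1 := by
    rw [Real.sqrt_inv, Real.sqrt_sq hx.le, inv_inv]
  have e2 : (Real.sqrt ((p.2 ^ 2)⁻¹))⁻¹ = p.2 := by
    rw [Real.sqrt_inv, Real.sqrt_sq hy.le, inv_inv]
  rw [e1, e2] at hkey
  exact hkey
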